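/- arXiv:2511.09145 — 6 statements merged into one kernel-verified Lean document; each statement's English description precedes it below -/
import Mathlib

section
/- Let δ > 0, θ ∈ (0,1], q ∈ (0,1), and C ≥ 0, and let a, r, e, x, y be nonnegative real numbers satisfying r² ≤ a², θ·a² ≤ r², x ≤ (a² − r²)^{1/2} + C·e, and y ≤ q·r + C·e. Then x² + y² ≤ (1+δ)·(1 − (1−q²)·θ)·a² + 2·(1+δ^{-1})·C²·e². -/
lemma young_aux (δ s t : ℝ) (hδ : 0 < δ) (hs : 0 ≤ s) (ht : 0 ≤ t) :
    (s + t) ^ 2 ≤ (1 + δ) * s ^ 2 + (1 + δ⁻¹) * t ^ 2 := by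
  have h : δ * δ⁻¹ = 1 := mul_inv_cancel₀ hδ.ne'
  have hinv : 0 < δ⁻¹ := inv_pos.mpr hδ
  nlinarith [sq_nonneg (δ * s - t), sq_nonneg (s - t), mul_pos hδ hinv]

/-- Estimator-reduction inequality: under Dörfler marking `θ·a² ≤ r²`, stability and
reduction bounds on `x` and `y`, Young's inequality yields
`x² + y² ≤ (1+δ)(1 − (1−q²)θ)a² + 2(1+δ⁻¹)C²e²`. -/
theorem estimator_reduction_inequality
    (δ θ q C a r e x y : ℝ)
    (hδ : 0 < δ) (hθ0 : 0 < θ) (hθ1 : θ ≤ 1) (hq0 : 0 < q) (hq1 : q < 1)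
    (hC : 0 ≤ C) (ha : 0 ≤ a) (hr : 0 ≤ r) (he : 0 ≤ e) (hx : 0 ≤ x) (hy : 0 ≤ y)
    (hra : r ^ 2 ≤ a ^ 2) (hmark : θ * a ^ 2 ≤ r ^ 2)
    (hxb : x ≤ Real.sqrt (a ^ 2 - r ^ 2) + C * e)
    (hyb : y ≤ q * r + C * e) :
    x ^ 2 + y ^ 2 ≤
      (1 + δ) * (1 - (1 - q ^ 2) * θ) * a ^ 2 + 2 * (1 + δ⁻¹) * C ^ 2 * e ^ 2 := by
  have hsub : (0:ℝ) ≤ a ^ 2 - r ^ 2 := by linarith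
  have hs := Real.sqrt_nonneg (a ^ 2 - r ^ 2)
  have hsq : Real.sqrt (a ^ 2 - r ^ 2) ^ 2 = a ^ 2 - r ^ 2 := Real.sq_sqrt hsub
  have hCe : 0 ≤ C * e := mul_nonneg hC he
  have hx2 : x ^ 2 ≤ (Real.sqrt (a ^ 2 - r ^ 2) + C * e) ^ 2 :=
    pow_le_pow_left₀ hx hxb 2
  have hy2 : y ^ 2 ≤ (q * r + C * e) ^ 2 :=
    pow_le_pow_left₀ hy hyb 2
  have h1 := young_aux δ (Real.sqrt (a ^ 2 - r ^ 2)) (C * e) hδ hs hCe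
  have h2 := young_aux δ (q * r) (C * e) hδ (mul_nonneg hq0.le hr) hCe
  have hδi : 0 < δ⁻¹ := inv_pos.mpr hδ
  nlinarith [sq_nonneg q,
    mul_le_mul_of_nonneg_left hmark (by nlinarith [mul_pos (by linarith : (0:ℝ) < 1 - q) (by linarith : (0:ℝ) < 1 + q)] : (0:ℝ) ≤ (1+δ)*(1-q^2))]
end

section
/- Let (a_ℓ)_{ℓ∈ℕ} and (e_ℓ)_{ℓ∈ℕ} be sequences of nonnegative real numbers, and let 0 < ρ < 1 and C₁, C₂ ≥ 0 be constants such that, for all ℓ ∈ ℕ, a_{ℓ+1}² ≤ ρ·a_ℓ² + C₁·e_ℓ², and the series Σ_{k=ℓ}^∞ e_k² converges with Σ_{k=ℓ}^∞ e_k² ≤ C₂·a_ℓ². Then there exist a constant C_lin > 0 and q_lin ∈ (0,1), depending only on ρ, C₁, C₂, such that a_{ℓ+n} ≤ C_lin · q_lin^n · a_ℓ for all ℓ, n ∈ ℕ. -/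
/-- Abstract R-linear convergence: a perturbed contraction for `a_ℓ²` together with
tail summability of the perturbations `e_ℓ²` controlled by `a_ℓ²` yields R-linear
decay `a_{ℓ+n} ≤ C_lin · q_lin^n · a_ℓ`. -/
theorem r_linear_convergence
    (a e : ℕ → ℝ) (ha : ∀ ℓ, 0 ≤ a ℓ) (he : ∀ ℓ, 0 ≤ e ℓ)
    (ρ C₁ C₂ : ℝ) (hρ0 : 0 < ρ) (hρ1 : ρ < 1) (hC₁ : 0 ≤ C₁) (hC₂ : 0 ≤ C₂)
    (hrec : ∀ ℓ, a (ℓ + 1) ^ 2 ≤ ρ * a ℓ ^ 2 + C₁ * e ℓ ^ 2)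
    (hsummable : ∀ ℓ, Summable (fun k : ℕ => e (ℓ + k) ^ 2))
    (htail : ∀ ℓ, ∑' k : ℕ, e (ℓ + k) ^ 2 ≤ C₂ * a ℓ ^ 2) :
    ∃ Clin : ℝ, 0 < Clin ∧ ∃ qlin : ℝ, 0 < qlin ∧ qlin < 1 ∧
      ∀ ℓ n : ℕ, a (ℓ + n) ≤ Clin * qlin ^ n * a ℓ := by
  set b : ℕ → ℝ := fun ℓ => a ℓ ^ 2 with hbdef
  have hb0 : ∀ ℓ, 0 ≤ b ℓ := fun ℓ => sq_nonneg _
  have h1ρ : 0 < 1 - ρ := by linarith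
  set C : ℝ := (ρ + C₁ * C₂) / (1 - ρ) with hCdef
  have hCpos : 0 < C := div_pos (by positivity) h1ρ
  set M : ℝ := 1 + C with hMdef
  have hM1 : 1 < M := by simp [hMdef]; linarith
  have hM0 : 0 < M := by linarith
  -- uniform bound on partial sums of b
  have key : ∀ ℓ N, ∑ k ∈ Finset.range N, b (ℓ + k) ≤ M * b ℓ := by
    intro ℓ N
    cases N with
    | zero => simp; positivity
    | succ N' =>
      rw [Finset.sum_range_succ' (fun k => b (ℓ + k)) N']
      set S : ℝ := ∑ k ∈ Finset.range N', b (ℓ + (k + 1)) with hSdef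
      have hS : S ≤ C * b ℓ := by
        have h1 : S ≤ ∑ k ∈ Finset.range N', (ρ * b (ℓ + k) + C₁ * e (ℓ + k) ^ 2) := by
          apply Finset.sum_le_sum
          intro k _
          have := hrec (ℓ + k)
          simpa [hbdef, add_assoc] using this
        have h2 : ∑ k ∈ Finset.range N', b (ℓ + k) ≤ b ℓ + S := by
          have hsub : ∑ k ∈ Finset.range N', b (ℓ + k)
              ≤ ∑ k ∈ Finset.range (N' + 1), b (ℓ + k) :=
            Finset.sum_le_sum_of_subset_of_nonneg
              (Finset.range_subset_range.2 (Nat.le_succ _)) (fun i _ _ => hb0 _)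
          calc ∑ k ∈ Finset.range N', b (ℓ + k)
              ≤ ∑ k ∈ Finset.range (N' + 1), b (ℓ + k) := hsub
            _ = b ℓ + S := by
                rw [Finset.sum_range_succ' (fun k => b (ℓ + k)) N']
                simp [hSdef, add_comm]
        have h3 : ∑ k ∈ Finset.range N', e (ℓ + k) ^ 2 ≤ C₂ * b ℓ := by
          calc ∑ k ∈ Finset.range N', e (ℓ + k) ^ 2
              ≤ ∑' k : ℕ, e (ℓ + k) ^ 2 :=
                Summable.sum_le_tsum _ (fun i _ => sq_nonneg _) (hsummable ℓ)
            _ ≤ C₂ * b ℓ := htail ℓ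
        have h4 : S ≤ ρ * (b ℓ + S) + C₁ * (C₂ * b ℓ) := by
          calc S ≤ ∑ k ∈ Finset.range N', (ρ * b (ℓ + k) + C₁ * e (ℓ + k) ^ 2) := h1
            _ = ρ * (∑ k ∈ Finset.range N', b (ℓ + k))
                + C₁ * (∑ k ∈ Finset.range N', e (ℓ + k) ^ 2) := by
                rw [Finset.sum_add_distrib, Finset.mul_sum, Finset.mul_sum]
            _ ≤ ρ * (b ℓ + S) + C₁ * (C₂ * b ℓ) := by
                gcongr
        have h5 : S * (1 - ρ) ≤ (ρ + C₁ * C₂) * b ℓ := by nlinarith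
        rw [hCdef, div_mul_eq_mul_div, le_div_iff₀ h1ρ]
        linarith
      have : b (ℓ + 0) = b ℓ := by norm_num
      rw [this]
      calc S + b ℓ ≤ C * b ℓ + b ℓ := by linarith
        _ = M * b ℓ := by ring
  have hsumb : ∀ ℓ, Summable (fun k : ℕ => b (ℓ + k)) := fun ℓ =>
    summable_of_sum_range_le (fun k => hb0 _) (key ℓ)
  set T : ℕ → ℝ := fun ℓ => ∑' k : ℕ, b (ℓ + k) with hTdef
  have hT0 : ∀ ℓ, 0 ≤ T ℓ := fun ℓ => tsum_nonneg (fun k => hb0 _)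
  have hTM : ∀ ℓ, T ℓ ≤ M * b ℓ := fun ℓ =>
    Real.tsum_le_of_sum_range_le (fun k => hb0 _) (key ℓ)
  have hTrec : ∀ ℓ, T ℓ = b ℓ + T (ℓ + 1) := by
    intro ℓ
    have h := Summable.tsum_eq_zero_add (hsumb ℓ)
    have h2 : (∑' k : ℕ, b (ℓ + (k + 1))) = ∑' k : ℕ, b (ℓ + 1 + k) :=
      tsum_congr (fun k => by ring_nf)
    simpa [hTdef, h2] using h
  have hbT : ∀ ℓ, b ℓ ≤ T ℓ := by
    intro ℓ
    have := Summable.le_tsum (hsumb ℓ) 0 (fun i _ => hb0 _)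
    simpa using this
  set q : ℝ := 1 - 1 / M with hqdef
  have hq0 : 0 < q := by
    have h : 1 / M < 1 := by rw [div_lt_one hM0]; exact hM1
    rw [hqdef]; linarith
  have hq1 : q < 1 := by
    have h : 0 < 1 / M := by positivity
    rw [hqdef]; linarith
  have hstep : ∀ ℓ, T (ℓ + 1) ≤ q * T ℓ := by
    intro ℓ
    have hdiv : T ℓ / M ≤ b ℓ := (div_le_iff₀ hM0).2 (by linarith [hTM ℓ])
    have : T (ℓ + 1) = T ℓ - b ℓ := by linarith [hTrec ℓ]
    rw [this]
    have : q * T ℓ = T ℓ - T ℓ / M := by rw [hqdef]; ring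
    rw [this]
    linarith
  have hTiter : ∀ ℓ n, T (ℓ + n) ≤ q ^ n * T ℓ := by
    intro ℓ n
    induction n with
    | zero => simp
    | succ n ih =>
      calc T (ℓ + (n + 1)) = T ((ℓ + n) + 1) := by ring_nf
        _ ≤ q * T (ℓ + n) := hstep _
        _ ≤ q * (q ^ n * T ℓ) := by
            exact mul_le_mul_of_nonneg_left ih (le_of_lt hq0)
        _ = q ^ (n + 1) * T ℓ := by ring
  -- conclusion
  refine ⟨Real.sqrt M, Real.sqrt_pos.2 hM0, Real.sqrt q, Real.sqrt_pos.2 hq0, ?_, ?_⟩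
  · have := Real.sqrt_lt_sqrt (le_of_lt hq0) hq1
    simpa using this
  · intro ℓ n
    have hbb : b (ℓ + n) ≤ M * q ^ n * b ℓ := by
      calc b (ℓ + n) ≤ T (ℓ + n) := hbT _
        _ ≤ q ^ n * T ℓ := hTiter ℓ n
        _ ≤ q ^ n * (M * b ℓ) := by
            exact mul_le_mul_of_nonneg_left (hTM ℓ) (by positivity)
        _ = M * q ^ n * b ℓ := by ring
    have h1 : a (ℓ + n) = Real.sqrt (b (ℓ + n)) := (Real.sqrt_sq (ha _)).symm
    have hsqpow : ∀ (x : ℝ), 0 ≤ x → ∀ m : ℕ, Real.sqrt (x ^ m) = Real.sqrt x ^ m := by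
      intro x hx m
      induction m with
      | zero => simp
      | succ m ih => rw [pow_succ, pow_succ, Real.sqrt_mul (by positivity), ih]
    have h2 : Real.sqrt (M * q ^ n * b ℓ)
        = Real.sqrt M * Real.sqrt q ^ n * a ℓ := by
      rw [Real.sqrt_mul (by positivity), Real.sqrt_mul (le_of_lt hM0),
        Real.sqrt_sq (ha ℓ), hsqpow q (le_of_lt hq0)]
    calc a (ℓ + n) = Real.sqrt (b (ℓ + n)) := h1
      _ ≤ Real.sqrt (M * q ^ n * b ℓ) := Real.sqrt_le_sqrt hbb
      _ = Real.sqrt M * Real.sqrt q ^ n * a ℓ := h2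
end

section
/- Let (a_ℓ)_{ℓ∈ℕ} be a sequence of positive real numbers and (N_ℓ)_{ℓ∈ℕ} a sequence of nonnegative real numbers. Let s > 0, C₁ > 0, C_lin > 0, and q ∈ (0,1) be constants such that a_{ℓ+n} ≤ C_lin·q^n·a_ℓ for all ℓ, n ∈ ℕ, and N_ℓ ≤ C₁·Σ_{j=0}^{ℓ-1} a_j^{-1/s} for all ℓ ∈ ℕ. Then there exists a constant C > 0, depending only on s, C₁, C_lin, q, such that N_ℓ^s · a_ℓ ≤ C for all ℓ ∈ ℕ. -/
/-- Concluding arithmetic of the optimal-convergence proof: if `a_ℓ` is R-linearly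
convergent and `N_ℓ` is bounded by the cumulative sum `C₁ Σ_{j<ℓ} a_j^{-1/s}`, then
`N_ℓ^s · a_ℓ` is uniformly bounded. -/
theorem optimal_rate_arithmetic
    (a N : ℕ → ℝ) (ha : ∀ ℓ, 0 < a ℓ) (hN : ∀ ℓ, 0 ≤ N ℓ)
    (s C₁ Clin q : ℝ) (hs : 0 < s) (hC₁ : 0 < C₁) (hClin : 0 < Clin)
    (hq0 : 0 < q) (hq1 : q < 1)
    (hlin : ∀ ℓ n : ℕ, a (ℓ + n) ≤ Clin * q ^ n * a ℓ)
    (hNb : ∀ ℓ : ℕ, N ℓ ≤ C₁ * ∑ j ∈ Finset.range ℓ, a j ^ (-(1 / s))) :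
    ∃ C : ℝ, 0 < C ∧ ∀ ℓ : ℕ, N ℓ ^ s * a ℓ ≤ C := by
  set t : ℝ := q ^ (1 / s) with ht
  have hs' : (0:ℝ) < 1 / s := by positivity
  have ht0 : 0 < t := Real.rpow_pos_of_pos hq0 _
  have ht1 : t < 1 := Real.rpow_lt_one hq0.le hq1 hs'
  have h1t : 0 < 1 - t := by linarith
  set K : ℝ := C₁ * Clin ^ (1 / s) * (1 / (1 - t)) with hK
  have hKpos : 0 < K := by
    have : (0:ℝ) < Clin ^ (1 / s) := Real.rpow_pos_of_pos hClin _
    positivity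
  refine ⟨K ^ s, Real.rpow_pos_of_pos hKpos _, fun ℓ => ?_⟩
  -- pointwise bound on the summands
  have key : ∀ j ∈ Finset.range ℓ,
      a j ^ (-(1 / s)) ≤ Clin ^ (1 / s) * a ℓ ^ (-(1 / s)) * t ^ (ℓ - j) := by
    intro j hj
    have hjℓ : j ≤ ℓ := (Finset.mem_range.mp hj).le
    have hlin' : a ℓ ≤ Clin * q ^ (ℓ - j) * a j := by
      have := hlin j (ℓ - j)
      rwa [Nat.add_sub_cancel' hjℓ] at this
    have hD : (0:ℝ) < Clin * q ^ (ℓ - j) := by positivity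
    have hdiv : a ℓ / (Clin * q ^ (ℓ - j)) ≤ a j := by
      rw [div_le_iff₀ hD]; linarith [hlin']
    have hpos : (0:ℝ) < a ℓ / (Clin * q ^ (ℓ - j)) := div_pos (ha ℓ) hD
    have h2 : a j ^ (-(1 / s)) ≤ (a ℓ / (Clin * q ^ (ℓ - j))) ^ (-(1 / s)) :=
      Real.rpow_le_rpow_of_nonpos hpos hdiv (by linarith)
    refine h2.trans_eq ?_
    rw [Real.rpow_neg hpos.le, Real.div_rpow (ha ℓ).le hD.le, Real.mul_rpow hClin.le (by positivity),
      ← Real.rpow_natCast q (ℓ - j), ← Real.rpow_mul hq0.le, mul_comm ((ℓ - j : ℕ) : ℝ),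
      Real.rpow_mul hq0.le, Real.rpow_natCast, ← ht, Real.rpow_neg (ha ℓ).le]
    field_simp
  -- sum bound
  have hsum : ∑ j ∈ Finset.range ℓ, a j ^ (-(1 / s))
      ≤ Clin ^ (1 / s) * a ℓ ^ (-(1 / s)) * (1 / (1 - t)) := by
    calc ∑ j ∈ Finset.range ℓ, a j ^ (-(1 / s))
        ≤ ∑ j ∈ Finset.range ℓ, Clin ^ (1 / s) * a ℓ ^ (-(1 / s)) * t ^ (ℓ - j) :=
          Finset.sum_le_sum key
      _ = Clin ^ (1 / s) * a ℓ ^ (-(1 / s)) * ∑ j ∈ Finset.range ℓ, t ^ (ℓ - j) := by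
          rw [Finset.mul_sum]
      _ ≤ Clin ^ (1 / s) * a ℓ ^ (-(1 / s)) * (1 / (1 - t)) := by
          have hfac : (0:ℝ) ≤ Clin ^ (1 / s) * a ℓ ^ (-(1 / s)) := by
            have h1 : (0:ℝ) < Clin ^ (1 / s) := Real.rpow_pos_of_pos hClin _
            have h2 : (0:ℝ) < a ℓ ^ (-(1 / s)) := Real.rpow_pos_of_pos (ha ℓ) _
            positivity
          refine mul_le_mul_of_nonneg_left ?_ hfac
          have heq : ∑ j ∈ Finset.range ℓ, t ^ (ℓ - j) ≤ ∑ j ∈ Finset.range ℓ, t ^ j := by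
            rw [← Finset.sum_range_reflect (fun j => t ^ j) ℓ]
            refine Finset.sum_le_sum fun i hi => ?_
            have hi' : i < ℓ := Finset.mem_range.mp hi
            exact pow_le_pow_of_le_one ht0.le ht1.le (by omega)
          refine heq.trans ?_
          have := geom_sum_eq (ne_of_lt ht1) ℓ
          rw [this]
          have heq2 : (t ^ ℓ - 1) / (t - 1) = (1 - t ^ ℓ) / (1 - t) := by
            rw [← neg_div_neg_eq]; ring_nf
          rw [heq2, div_le_div_iff₀ h1t h1t]
          have htn : 0 ≤ t ^ ℓ := by positivity
          nlinarith
  -- conclude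
  have hNℓ : N ℓ ≤ K * a ℓ ^ (-(1 / s)) := by
    refine (hNb ℓ).trans ?_
    calc C₁ * ∑ j ∈ Finset.range ℓ, a j ^ (-(1 / s))
        ≤ C₁ * (Clin ^ (1 / s) * a ℓ ^ (-(1 / s)) * (1 / (1 - t))) :=
          mul_le_mul_of_nonneg_left hsum hC₁.le
      _ = K * a ℓ ^ (-(1 / s)) := by rw [hK]; ring
  have haℓ : (0:ℝ) < a ℓ ^ (-(1 / s)) := Real.rpow_pos_of_pos (ha ℓ) _
  have hNs : N ℓ ^ s ≤ (K * a ℓ ^ (-(1 / s))) ^ s :=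
    Real.rpow_le_rpow (hN ℓ) hNℓ hs.le
  have hexp : (K * a ℓ ^ (-(1 / s))) ^ s = K ^ s * (a ℓ)⁻¹ := by
    rw [Real.mul_rpow hKpos.le haℓ.le, ← Real.rpow_mul (ha ℓ).le]
    congr 1
    rw [show -(1 / s) * s = -1 by field_simp, Real.rpow_neg_one]
  calc N ℓ ^ s * a ℓ ≤ (K * a ℓ ^ (-(1 / s))) ^ s * a ℓ :=
        mul_le_mul_of_nonneg_right hNs (ha ℓ).le
    _ = K ^ s * ((a ℓ)⁻¹ * a ℓ) := by rw [hexp]; ring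
    _ = K ^ s := by rw [inv_mul_cancel₀ (ha ℓ).ne', mul_one]
end

section
/- Let C_stab > 0 and C_drel > 0 and let 0 < θ < 1/(1 + C_stab²·C_drel²). Then there exists q ∈ (0,1), depending only on θ, C_stab, C_drel, such that for all nonnegative real numbers η, η', ρ, e satisfying η' ≤ q·η, e ≤ C_drel·ρ, and η² ≤ ρ² + (η' + C_stab·e)², it holds that θ·η² ≤ ρ². -/
set_option maxHeartbeats 1000000


/-- Arithmetic core of the optimality of Dörfler marking: for
`0 < θ < 1/(1 + C_stab²·C_drel²)` there is `q ∈ (0,1)` such that whenever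
`η' ≤ q·η`, `e ≤ C_drel·ρ`, and `η² ≤ ρ² + (η' + C_stab·e)²`, the Dörfler
criterion `θ·η² ≤ ρ²` holds. -/
theorem doerfler_marking_optimality
    (Cstab Cdrel θ : ℝ) (hstab : 0 < Cstab) (hdrel : 0 < Cdrel)
    (hθ0 : 0 < θ) (hθ : θ < 1 / (1 + Cstab ^ 2 * Cdrel ^ 2)) :
    ∃ q : ℝ, 0 < q ∧ q < 1 ∧
      ∀ η η' ρ e : ℝ, 0 ≤ η → 0 ≤ η' → 0 ≤ ρ → 0 ≤ e →
        η' ≤ q * η → e ≤ Cdrel * ρ →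
        η ^ 2 ≤ ρ ^ 2 + (η' + Cstab * e) ^ 2 →
        θ * η ^ 2 ≤ ρ ^ 2 := by
  set C2 : ℝ := Cstab ^ 2 * Cdrel ^ 2 with hC2def
  have hC2 : 0 < C2 := by positivity
  have h1C2 : 0 < 1 + C2 := by positivity
  have hδ : 0 < 1 - θ * (1 + C2) := by
    have := (lt_div_iff₀ h1C2).mp hθ
    linarith
  set δ : ℝ := 1 - θ * (1 + C2) with hδdef
  have hδ1 : δ < 1 := by
    have : 0 < θ * (1 + C2) := by positivity
    simp only [hδdef]; linarith
  set ε : ℝ := δ / (2 * θ * C2) with hεdef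
  have hε : 0 < ε := by positivity
  set A : ℝ := 1 + 1 / ε with hAdef
  have hA : 1 < A := by
    have : 0 < 1 / ε := by positivity
    simp only [hAdef]; linarith
  have hA0 : 0 < A := by linarith
  clear_value A ε δ C2
  refine ⟨Real.sqrt (δ / (2 * A)), Real.sqrt_pos.mpr (by positivity), ?_, ?_⟩
  · have h1 : δ / (2 * A) < 1 := by
      rw [div_lt_one (by positivity)]; nlinarith
    calc Real.sqrt (δ / (2 * A)) < Real.sqrt 1 := by
          exact Real.sqrt_lt_sqrt (by positivity) h1
      _ = 1 := Real.sqrt_one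
  · intro η η' ρ e hη hη' hρ he hqη hCe hest
    have hq2 : Real.sqrt (δ / (2 * A)) ^ 2 = δ / (2 * A) :=
      Real.sq_sqrt (by positivity)
    have hη'2 : η' ^ 2 ≤ (δ / (2 * A)) * η ^ 2 := by
      have := mul_self_le_mul_self hη' hqη
      nlinarith [Real.sqrt_nonneg (δ / (2 * A))]
    have he2 : Cstab ^ 2 * e ^ 2 ≤ C2 * ρ ^ 2 := by
      have := mul_self_le_mul_self he hCe
      nlinarith
    -- Young's inequality
    have hyoung : (η' + Cstab * e) ^ 2 ≤ (1 + ε) * (Cstab * e) ^ 2 + A * η' ^ 2 := by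
      have key : 0 ≤ (ε * (Cstab * e) - η') ^ 2 := sq_nonneg _
      have hεne : ε ≠ 0 := ne_of_gt hε
      have h2' : ε * (2 * η' * (Cstab * e)) ≤
          ε * (ε * (Cstab * e) ^ 2 + (1 / ε) * η' ^ 2) := by
        field_simp
        nlinarith [key]
      have h2 := le_of_mul_le_mul_left h2' hε
      have hAexp : A * η' ^ 2 = η' ^ 2 + (1 / ε) * η' ^ 2 := by
        simp only [hAdef]; ring
      have hx : (η' + Cstab * e) ^ 2
          = η' ^ 2 + 2 * η' * (Cstab * e) + (Cstab * e) ^ 2 := by ring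
      have hy : (1 + ε) * (Cstab * e) ^ 2
          = (Cstab * e) ^ 2 + ε * (Cstab * e) ^ 2 := by ring
      linarith
    -- combine
    have hcomb : η ^ 2 ≤ (1 + (1 + ε) * C2) * ρ ^ 2 + (δ / 2) * η ^ 2 := by
      have h3 : A * η' ^ 2 ≤ A * ((δ / (2 * A)) * η ^ 2) :=
        mul_le_mul_of_nonneg_left hη'2 (le_of_lt hA0)
      have h4 : A * ((δ / (2 * A)) * η ^ 2) = (δ / 2) * η ^ 2 := by
        field_simp
      have h5 : (1 + ε) * (Cstab * e) ^ 2 ≤ (1 + ε) * (C2 * ρ ^ 2) := by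
        apply mul_le_mul_of_nonneg_left _ (by positivity)
        calc (Cstab * e) ^ 2 = Cstab ^ 2 * e ^ 2 := by ring
          _ ≤ C2 * ρ ^ 2 := he2
      have h6 : (1 + (1 + ε) * C2) * ρ ^ 2 = ρ ^ 2 + (1 + ε) * (C2 * ρ ^ 2) := by
        ring
      linarith
    have hkey : θ * (1 + (1 + ε) * C2) = 1 - δ / 2 := by
      have hθne : θ ≠ 0 := ne_of_gt hθ0
      have hC2ne : C2 ≠ 0 := ne_of_gt hC2
      have hmid : θ * (ε * C2) = δ / 2 := by
        rw [hεdef]; field_simp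
      linear_combination hmid + hδdef
    have hhalf : 0 < 1 - δ / 2 := by linarith
    have h8 := mul_le_mul_of_nonneg_left hcomb (le_of_lt hθ0)
    have h10 : θ * ((1 + (1 + ε) * C2) * ρ ^ 2 + (δ / 2) * η ^ 2)
        = (1 - δ / 2) * ρ ^ 2 + θ * ((δ / 2) * η ^ 2) := by
      linear_combination ρ ^ 2 * hkey
    have hfin : (1 - δ / 2) * (θ * η ^ 2) ≤ (1 - δ / 2) * ρ ^ 2 := by
      nlinarith [h8, h10]
    exact le_of_mul_le_mul_left hfin hhalf
end

section
/- Let X be a set and let S and T be finite families of nonempty subsets of X such that the members of S are pairwise disjoint, the members of T are pairwise disjoint, ⋃S = ⋃T, and every t ∈ T is contained in some s ∈ S. Then #(S \ T) ≤ #T − #S, #T − #S ≤ #(T \ S), and #(T \ S) ≤ 2·(#T − #S), where S \ T and T \ S denote set differences of the families and # denotes cardinality. -/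
/-- Counting lemma for refinements of partitions: if `T` refines `S` (both finite
families of nonempty pairwise disjoint sets covering the same set), then
`#(S \ T) ≤ #T − #S ≤ #(T \ S) ≤ 2(#T − #S)`. -/
theorem partition_refinement_count
    {X : Type*} [DecidableEq (Set X)] (S T : Finset (Set X))
    (hSne : ∀ s ∈ S, s.Nonempty) (hTne : ∀ t ∈ T, t.Nonempty)
    (hSdisj : (S : Set (Set X)).Pairwise Disjoint)
    (hTdisj : (T : Set (Set X)).Pairwise Disjoint)
    (hcover : ⋃₀ (S : Set (Set X)) = ⋃₀ (T : Set (Set X)))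
    (hrefine : ∀ t ∈ T, ∃ s ∈ S, t ⊆ s) :
    ((S \ T).card : ℤ) ≤ (T.card : ℤ) - S.card ∧
    (T.card : ℤ) - S.card ≤ ((T \ S).card : ℤ) ∧
    ((T \ S).card : ℤ) ≤ 2 * ((T.card : ℤ) - S.card) := by
  classical
  -- every t ∈ T meeting s ∈ S is contained in s
  have habs : ∀ t ∈ T, ∀ s ∈ S, (t ∩ s).Nonempty → t ⊆ s := by
    intro t ht s hs ⟨x, hxt, hxs⟩
    obtain ⟨s', hs', hts'⟩ := hrefine t ht
    rcases eq_or_ne s' s with rfl | hne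
    · exact hts'
    · exact absurd (Set.disjoint_left.mp (hSdisj (by simpa using hs') (by simpa using hs) hne)
        (hts' hxt) hxs) (fun h => h)
  -- key: for each s ∈ S \ T there are at least two elements of T \ S inside s
  have key2 : ∀ s ∈ S \ T, 2 ≤ ((T \ S).filter (fun t => t ⊆ s)).card := by
    intro s hs
    obtain ⟨hsS, hsT⟩ := Finset.mem_sdiff.mp hs
    have mem_sub : ∀ t ∈ T, t ⊆ s → t ∈ (T \ S).filter (fun t => t ⊆ s) := by
      intro t ht hts
      have htS : t ∉ S := by
        intro htS
        rcases eq_or_ne t s with rfl | hne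
        · exact hsT ht
        · obtain ⟨x, hx⟩ := hTne t ht
          exact Set.disjoint_left.mp (hSdisj (by simpa using htS) (by simpa using hsS) hne)
            hx (hts hx)
      exact Finset.mem_filter.mpr ⟨Finset.mem_sdiff.mpr ⟨ht, htS⟩, hts⟩
    obtain ⟨x, hxs⟩ := hSne s hsS
    have hxU : x ∈ ⋃₀ (T : Set (Set X)) := by
      rw [← hcover]; exact ⟨s, by simpa using hsS, hxs⟩
    obtain ⟨t₁, ht₁T, hxt₁⟩ := hxU
    have ht₁T' : t₁ ∈ T := by simpa using ht₁T
    have ht₁s : t₁ ⊆ s := habs t₁ ht₁T' s hsS ⟨x, hxt₁, hxs⟩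
    have hne : ¬ s ⊆ t₁ := by
      intro h
      exact hsT (by rw [Set.Subset.antisymm h ht₁s]; exact ht₁T')
    obtain ⟨y, hys, hyt₁⟩ := Set.not_subset.mp hne
    have hyU : y ∈ ⋃₀ (T : Set (Set X)) := by
      rw [← hcover]; exact ⟨s, by simpa using hsS, hys⟩
    obtain ⟨t₂, ht₂T, hyt₂⟩ := hyU
    have ht₂T' : t₂ ∈ T := by simpa using ht₂T
    have ht₂s : t₂ ⊆ s := habs t₂ ht₂T' s hsS ⟨y, hyt₂, hys⟩
    have h12 : t₁ ≠ t₂ := fun h => hyt₁ (h ▸ hyt₂)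
    exact Finset.one_lt_card.mpr ⟨t₁, mem_sub t₁ ht₁T' ht₁s, t₂, mem_sub t₂ ht₂T' ht₂s, h12⟩
  -- fibers are disjoint
  have hdisj : ∀ s₁ ∈ S \ T, ∀ s₂ ∈ S \ T, s₁ ≠ s₂ →
      Disjoint ((T \ S).filter (fun t => t ⊆ s₁)) ((T \ S).filter (fun t => t ⊆ s₂)) := by
    intro s₁ h1 s₂ h2 hne
    rw [Finset.disjoint_left]
    intro t ht1 ht2
    obtain ⟨ht1', ht1s⟩ := Finset.mem_filter.mp ht1
    obtain ⟨_, ht2s⟩ := Finset.mem_filter.mp ht2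
    obtain ⟨x, hx⟩ := hTne t (Finset.mem_sdiff.mp ht1').1
    exact Set.disjoint_left.mp
      (hSdisj (by simpa using (Finset.mem_sdiff.mp h1).1)
        (by simpa using (Finset.mem_sdiff.mp h2).1) hne) (ht1s hx) (ht2s hx)
  have key : 2 * (S \ T).card ≤ (T \ S).card := by
    calc 2 * (S \ T).card = ∑ _s ∈ S \ T, 2 := by rw [Finset.sum_const, smul_eq_mul, mul_comm]
    _ ≤ ∑ s ∈ S \ T, ((T \ S).filter (fun t => t ⊆ s)).card := Finset.sum_le_sum key2
    _ = ((S \ T).biUnion (fun s => (T \ S).filter (fun t => t ⊆ s))).card :=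
        (Finset.card_biUnion hdisj).symm
    _ ≤ (T \ S).card := Finset.card_le_card
        (Finset.biUnion_subset.mpr fun s _ => Finset.filter_subset _ _)
  have hS : (S \ T).card + (S ∩ T).card = S.card := Finset.card_sdiff_add_card_inter S T
  have hT : (T \ S).card + (T ∩ S).card = T.card := Finset.card_sdiff_add_card_inter T S
  have hc : (S ∩ T).card = (T ∩ S).card := by rw [Finset.inter_comm]
  omega
end

section
/- Let X be a set and let T₀, T_H, T_h be finite families of nonempty subsets of X, each consisting of pairwise disjoint sets, with ⋃T₀ = ⋃T_H = ⋃T_h = X. Assume every a ∈ T_H is contained in some element of T₀, every b ∈ T_h is contained in some element of T₀, and for all a ∈ T_H and b ∈ T_h one has a ⊆ b, or b ⊆ a, or a ∩ b = ∅. Define the overlay O := { a ∈ T_H : ∃ b ∈ T_h, a ⊆ b } ∪ { b ∈ T_h : ∃ a ∈ T_H, b ⊆ a }. Then the members of O are nonempty and pairwise disjoint, ⋃O = X, every element of O is contained in some element of T_H and in some element of T_h, and #(O \ T_h) ≤ 2·#(T_H \ T₀). -/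
/-- Overlay estimate: if `T_H` and `T_h` are two partition refinements of a common
initial partition `T₀` of `X` such that any element of `T_H` and any element of `T_h`
are nested or disjoint, then the overlay `O` is again a partition of `X` refining both
`T_H` and `T_h`, and `#(O \ T_h) ≤ 2 · #(T_H \ T₀)`. -/
theorem overlay_estimate
    {X : Type*} (T₀ TH Th : Finset (Set X))
    (hT₀ne : ∀ s ∈ T₀, s.Nonempty) (hTHne : ∀ s ∈ TH, s.Nonempty)
    (hThne : ∀ s ∈ Th, s.Nonempty)
    (hT₀disj : (T₀ : Set (Set X)).Pairwise Disjoint)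
    (hTHdisj : (TH : Set (Set X)).Pairwise Disjoint)
    (hThdisj : (Th : Set (Set X)).Pairwise Disjoint)
    (hT₀cov : ⋃₀ (T₀ : Set (Set X)) = Set.univ)
    (hTHcov : ⋃₀ (TH : Set (Set X)) = Set.univ)
    (hThcov : ⋃₀ (Th : Set (Set X)) = Set.univ)
    (hTHref : ∀ a ∈ TH, ∃ s ∈ T₀, a ⊆ s)
    (hThref : ∀ b ∈ Th, ∃ s ∈ T₀, b ⊆ s)
    (hnested : ∀ a ∈ TH, ∀ b ∈ Th, a ⊆ b ∨ b ⊆ a ∨ a ∩ b = ∅) :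
    ∀ O : Set (Set X),
      O = {a | a ∈ TH ∧ ∃ b ∈ Th, a ⊆ b} ∪ {b | b ∈ Th ∧ ∃ a ∈ TH, b ⊆ a} →
      (∀ o ∈ O, o.Nonempty) ∧
      O.Pairwise Disjoint ∧
      ⋃₀ O = Set.univ ∧
      (∀ o ∈ O, (∃ a ∈ TH, o ⊆ a) ∧ ∃ b ∈ Th, o ⊆ b) ∧
      (O \ (Th : Set (Set X))).ncard ≤ 2 * ((TH : Set (Set X)) \ (T₀ : Set (Set X))).ncard := by
  intro O hO
  -- In a pairwise disjoint family, a nonempty member contained in another member equals it.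
  have eq_of_subset : ∀ (F : Finset (Set X)), (F : Set (Set X)).Pairwise Disjoint →
      ∀ s, s ∈ F → ∀ t, t ∈ F → s.Nonempty → s ⊆ t → s = t := by
    intro F hF s hs t ht hne hst
    by_contra h
    obtain ⟨x, hx⟩ := hne
    exact (Set.disjoint_left.mp (hF hs ht h) hx) (hst hx)
  -- Mixed disjointness helper
  have mixed : ∀ a ∈ TH, ∀ b ∈ Th, (∃ b' ∈ Th, a ⊆ b') → (∃ a' ∈ TH, b ⊆ a') →
      a ≠ b → Disjoint a b := by
    intro a ha b hb ⟨b', hb', hab'⟩ ⟨a', ha', hba'⟩ hne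
    rcases hnested a ha b hb with h | h | h
    · have : a = a' := eq_of_subset TH hTHdisj a ha a' ha' (hTHne a ha) (h.trans hba')
      exact absurd (h.antisymm (this ▸ hba')) hne
    · have : b = b' := eq_of_subset Th hThdisj b hb b' hb' (hThne b hb) (h.trans hab')
      exact absurd ((this ▸ hab' : a ⊆ b).antisymm h) hne
    · exact Set.disjoint_iff_inter_eq_empty.mpr h
  refine ⟨?_, ?_, ?_, ?_, ?_⟩
  · intro o ho
    rw [hO] at ho
    rcases ho with h | h
    · exact hTHne o h.1
    · exact hThne o h.1
  · intro o₁ h₁ o₂ h₂ hne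
    rw [hO] at h₁ h₂
    rcases h₁ with ⟨ha₁, hex₁⟩ | ⟨hb₁, hex₁⟩ <;>
      rcases h₂ with ⟨ha₂, hex₂⟩ | ⟨hb₂, hex₂⟩
    · exact hTHdisj ha₁ ha₂ hne
    · exact mixed o₁ ha₁ o₂ hb₂ hex₁ hex₂ hne
    · exact (mixed o₂ ha₂ o₁ hb₁ hex₂ hex₁ hne.symm).symm
    · exact hThdisj hb₁ hb₂ hne
  · ext x
    simp only [Set.mem_univ, iff_true]
    have hxa : x ∈ ⋃₀ (TH : Set (Set X)) := hTHcov ▸ Set.mem_univ x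
    have hxb : x ∈ ⋃₀ (Th : Set (Set X)) := hThcov ▸ Set.mem_univ x
    obtain ⟨a, ha, hxa⟩ := hxa
    obtain ⟨b, hb, hxb⟩ := hxb
    rcases hnested a ha b hb with h | h | h
    · exact ⟨a, hO ▸ Or.inl ⟨ha, b, hb, h⟩, hxa⟩
    · exact ⟨b, hO ▸ Or.inr ⟨hb, a, ha, h⟩, hxb⟩
    · have hx : x ∈ a ∩ b := ⟨hxa, hxb⟩
      rw [h] at hx
      exact hx.elim
  · intro o ho
    rw [hO] at ho
    rcases ho with ⟨ha, b, hb, hab⟩ | ⟨hb, a, ha, hba⟩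
    · exact ⟨⟨o, ha, subset_rfl⟩, ⟨b, hb, hab⟩⟩
    · exact ⟨⟨a, ha, hba⟩, ⟨o, hb, subset_rfl⟩⟩
  · have hsub : O \ (Th : Set (Set X)) ⊆ (TH : Set (Set X)) \ (T₀ : Set (Set X)) := by
      rintro a ⟨haO, haTh⟩
      rw [hO] at haO
      rcases haO with ⟨haTH, b, hb, hab⟩ | ⟨hbTh, _⟩
      · refine ⟨haTH, fun haT₀ => ?_⟩
        obtain ⟨s, hs, hbs⟩ := hThref b hb
        have has : a = s :=
          eq_of_subset T₀ hT₀disj a haT₀ s hs (hTHne a haTH) (hab.trans hbs)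
        have : a = b := hab.antisymm (has ▸ hbs)
        exact haTh (this ▸ hb)
      · exact absurd hbTh haTh
    have h1 : (O \ (Th : Set (Set X))).ncard ≤
        ((TH : Set (Set X)) \ (T₀ : Set (Set X))).ncard :=
      Set.ncard_le_ncard hsub (TH.finite_toSet.diff)
    omega
end
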